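/- Let B and A be countable structures. For every Borel adjoint equivalence of categories (F, G, η, ε) between Iso(B) and Iso(A) there is an infinitary bi-interpretation (I, J) between A and B such that F is naturally isomorphic to F_I and G is naturally isomorphic to F_J. -/

import Mathlib

namespace Paper

/-- A structure in a (countable) relational language with arity function `L`,
with domain `ω`.  `rel i` is the interpretation of the `i`-th relation symbol,
of arity `L i`. -/
structure Str (L : ℕ → ℕ) where
  rel : ∀ i, (Fin (L i) → ℕ) → Bool

/-- `g` is an isomorphism from `M` to `N`. -/
def IsIso {L : ℕ → ℕ} (M N : Str L) (g : ℕ ≃ ℕ) : Prop :=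
  ∀ i (v : Fin (L i) → ℕ), M.rel i v = N.rel i fun k => g (v k)

theorem isIso_refl {L : ℕ → ℕ} (M : Str L) : IsIso M M (Equiv.refl ℕ) := fun _ _ => rfl

/-- The automorphism group of `M`, as a subgroup of `S_∞ = Equiv.Perm ℕ`. -/
def aut {L : ℕ → ℕ} (M : Str L) : Subgroup (Equiv.Perm ℕ) where
  carrier := {g | IsIso M M g}
  one_mem' := isIso_refl M
  mul_mem' := by
    intro a b ha hb i v
    exact (hb i v).trans (ha i fun k => b (v k))
  inv_mem' := by
    intro a ha i v
    have h := ha i fun k => a⁻¹ (v k)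
    simpa using h.symm

theorem mem_aut {L : ℕ → ℕ} {M : Str L} {g : Equiv.Perm ℕ} (h : g ∈ aut M) : IsIso M M g := h

/-- The topology of pointwise convergence on `S_∞ = Equiv.Perm ℕ`, i.e. the topology
induced from Baire space `ω^ω`; automorphism groups of countable structures carry the
subspace topology. -/
instance : TopologicalSpace (Equiv.Perm ℕ) :=
  TopologicalSpace.induced (fun g => (g : ℕ → ℕ)) inferInstance

end Paper
namespace Paper

/-- An infinitary interpretation of `A` in `B` (Definition 1.1 of the paper).
The domain `Dom ⊆ B^{<ω}`, the equivalence relation `eqv` and the relations `R i`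
are required to be `L_{ω₁ω}`-definable without parameters in `B`; for countable
structures this is equivalent to invariance under all automorphisms of `B`
(acting coordinatewise on tuples), which is how definability is rendered here.
`F` is the map `f^B_A : Dom → A` inducing an isomorphism
`(Dom/∼; R₀/∼, R₁/∼, …) ≅ (A; P₀^A, P₁^A, …)`. -/
structure Interp {LA LB : ℕ → ℕ} (A : Str LA) (B : Str LB) where
  Dom : Set (List ℕ)
  eqv : List ℕ → List ℕ → Prop
  R : ∀ i, (Fin (LA i) → List ℕ) → Prop
  F : List ℕ → ℕ
  dom_inv : ∀ g ∈ aut B, ∀ l ∈ Dom, List.map (⇑g) l ∈ Dom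
  eqv_inv : ∀ g ∈ aut B, ∀ l₁ ∈ Dom, ∀ l₂ ∈ Dom,
    eqv l₁ l₂ → eqv (List.map (⇑g) l₁) (List.map (⇑g) l₂)
  R_inv : ∀ i, ∀ g ∈ aut B, ∀ v : Fin (LA i) → List ℕ,
    (∀ k, v k ∈ Dom) → R i v → R i fun k => List.map (⇑g) (v k)
  eqv_refl : ∀ l ∈ Dom, eqv l l
  eqv_symm : ∀ l₁ ∈ Dom, ∀ l₂ ∈ Dom, eqv l₁ l₂ → eqv l₂ l₁
  eqv_trans : ∀ l₁ ∈ Dom, ∀ l₂ ∈ Dom, ∀ l₃ ∈ Dom, eqv l₁ l₂ → eqv l₂ l₃ → eqv l₁ l₃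
  R_resp : ∀ i, ∀ v w : Fin (LA i) → List ℕ, (∀ k, v k ∈ Dom) → (∀ k, w k ∈ Dom) →
    (∀ k, eqv (v k) (w k)) → R i v → R i w
  F_surj : ∀ a : ℕ, ∃ l ∈ Dom, F l = a
  F_eqv : ∀ l₁ ∈ Dom, ∀ l₂ ∈ Dom, (F l₁ = F l₂ ↔ eqv l₁ l₂)
  F_rel : ∀ i, ∀ v : Fin (LA i) → List ℕ, (∀ k, v k ∈ Dom) →
    (R i v ↔ A.rel i (fun k => F (v k)) = true)

end Paper
namespace Paper

/-- An infinitary bi-interpretation of `A` and `B` (Definition 1.6 of the paper):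
interpretations of each structure in the other such that the composite maps
`f^A_B ∘ f̃^B_A : Dom_B^{(Dom_A^B)} → B` and `f^B_A ∘ f̃^A_B : Dom_A^{(Dom_B^A)} → A`
are `L_{ω₁ω}`-definable in `B` and in `A` respectively; definability is rendered as
invariance of the graph under all automorphisms. -/
structure BiInterp {LA LB : ℕ → ℕ} (A : Str LA) (B : Str LB) where
  I : Interp A B
  J : Interp B A
  comp_def_B : ∀ g ∈ aut B, ∀ LL : List (List ℕ), (∀ l ∈ LL, l ∈ I.Dom) →
    List.map I.F LL ∈ J.Dom →
    J.F (List.map I.F (List.map (List.map (⇑g)) LL)) = g (J.F (List.map I.F LL))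
  comp_def_A : ∀ g ∈ aut A, ∀ LL : List (List ℕ), (∀ l ∈ LL, l ∈ J.Dom) →
    List.map J.F LL ∈ I.Dom →
    I.F (List.map J.F (List.map (List.map (⇑g)) LL)) = g (I.F (List.map J.F LL))

end Paper
namespace Paper

def Isomorphic {L : ℕ → ℕ} (M N : Str L) : Prop := ∃ g : ℕ ≃ ℕ, IsIso M N g

/-- The copies of `B`: structures with domain `ω` isomorphic to `B`.  These are the
objects of the category `Iso(B)`; the morphisms are the isomorphisms between copies. -/
abbrev Copy {L : ℕ → ℕ} (B : Str L) := {M : Str L // Isomorphic M B}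

def selfCopy {L : ℕ → ℕ} (B : Str L) : Copy B := ⟨B, ⟨Equiv.refl ℕ, isIso_refl B⟩⟩

/-- A functor from `Iso(B)` to `Iso(A)`: it maps copies of `B` to copies of `A` and
isomorphisms between copies of `B` to isomorphisms between the corresponding copies
of `A`, preserving identity and composition (Definition 1.8). -/
structure IsoFunctor {LB LA : ℕ → ℕ} (B : Str LB) (A : Str LA) where
  obj : Copy B → Copy A
  map : ∀ (M N : Copy B) (g : ℕ ≃ ℕ), IsIso M.1 N.1 g → (ℕ ≃ ℕ)
  map_iso : ∀ M N g hg, IsIso (obj M).1 (obj N).1 (map M N g hg)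
  map_id : ∀ (M : Copy B) (h : IsIso M.1 M.1 (Equiv.refl ℕ)),
    map M M (Equiv.refl ℕ) h = Equiv.refl ℕ
  map_comp : ∀ (M N P : Copy B) (g₁ : ℕ ≃ ℕ) (h₁ : IsIso M.1 N.1 g₁)
    (g₂ : ℕ ≃ ℕ) (h₂ : IsIso N.1 P.1 g₂) (h₃ : IsIso M.1 P.1 (g₁.trans g₂)),
    map M P (g₁.trans g₂) h₃ = (map M N g₁ h₁).trans (map N P g₂ h₂)

/-- Codes of structures with domain `ω` as elements of Cantor space. -/
abbrev ObjCode (L : ℕ → ℕ) := (Σ i : ℕ, (Fin (L i) → ℕ)) → Bool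

def codeStr {L : ℕ → ℕ} (M : Str L) : ObjCode L := fun p => M.rel p.1 p.2

/-- A functor is Borel if its action on objects and its action on morphisms are
given by Borel operators on the codes. -/
def IsBorelFunctor {LB LA : ℕ → ℕ} {B : Str LB} {A : Str LA} (F : IsoFunctor B A) : Prop :=
  ∃ (Φ : ObjCode LB → ObjCode LA) (Ψ : ObjCode LB × (ℕ → ℕ) × ObjCode LB → (ℕ → ℕ)),
    Measurable Φ ∧ Measurable Ψ ∧
    (∀ M : Copy B, codeStr (F.obj M).1 = Φ (codeStr M.1)) ∧
    (∀ M N g hg, ⇑(F.map M N g hg) = Ψ (codeStr M.1, ⇑g, codeStr N.1))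

/-- Natural isomorphism of functors `Iso(B) → Iso(A)` (Definition 1.9). -/
def NatIso {LB LA : ℕ → ℕ} {B : Str LB} {A : Str LA} (F G : IsoFunctor B A) : Prop :=
  ∃ η : Copy B → (ℕ ≃ ℕ),
    (∀ M, IsIso (F.obj M).1 (G.obj M).1 (η M)) ∧
    (∀ (M N : Copy B) (g : ℕ ≃ ℕ) (hg : IsIso M.1 N.1 g),
      (η M).trans (G.map M N g hg) = (F.map M N g hg).trans (η N))

end Paper
namespace Paper

/-- An adjoint equivalence between the categories `Iso(B)` and `Iso(A)`
(Definition 1.11): functors in both directions together with natural isomorphisms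
`η : id → G∘F` and `ε : id → F∘G` satisfying the triangle identities
`F(η_M) = ε_{F(M)}` and `G(ε_N) = η_{G(N)}`. -/
structure AdjEquiv {LB LA : ℕ → ℕ} (B : Str LB) (A : Str LA) where
  F : IsoFunctor B A
  G : IsoFunctor A B
  η : Copy B → (ℕ ≃ ℕ)
  ε : Copy A → (ℕ ≃ ℕ)
  η_iso : ∀ M : Copy B, IsIso M.1 (G.obj (F.obj M)).1 (η M)
  ε_iso : ∀ N : Copy A, IsIso N.1 (F.obj (G.obj N)).1 (ε N)
  η_nat : ∀ (M M' : Copy B) (g : ℕ ≃ ℕ) (hg : IsIso M.1 M'.1 g),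
    (η M).trans (G.map (F.obj M) (F.obj M') (F.map M M' g hg) (F.map_iso M M' g hg)) =
      g.trans (η M')
  ε_nat : ∀ (N N' : Copy A) (g : ℕ ≃ ℕ) (hg : IsIso N.1 N'.1 g),
    (ε N).trans (F.map (G.obj N) (G.obj N') (G.map N N' g hg) (G.map_iso N N' g hg)) =
      g.trans (ε N')
  triangleF : ∀ M : Copy B, F.map M (G.obj (F.obj M)) (η M) (η_iso M) = ε (F.obj M)
  triangleG : ∀ N : Copy A, G.map N (F.obj (G.obj N)) (ε N) (ε_iso N) = η (G.obj N)

/-- An adjoint equivalence is Borel if `F`, `G`, `η` and `ε` are given by Borel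
operators on the codes. -/
def IsBorelAdjEquiv {LB LA : ℕ → ℕ} {B : Str LB} {A : Str LA} (E : AdjEquiv B A) : Prop :=
  IsBorelFunctor E.F ∧ IsBorelFunctor E.G ∧
    (∃ u : ObjCode LB → (ℕ → ℕ), Measurable u ∧ ∀ M : Copy B, u (codeStr M.1) = ⇑(E.η M)) ∧
    (∃ v : ObjCode LA → (ℕ → ℕ), Measurable v ∧ ∀ N : Copy A, v (codeStr N.1) = ⇑(E.ε N))

end Paper
namespace Paper

/-- The domain of the interpretation `I`, transferred to a copy `M` of `B`
(the set defined in `M` by the same `L_{ω₁ω}` definition that defines `I.Dom` in `B`). -/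
def DomIn {LA LB : ℕ → ℕ} {A : Str LA} {B : Str LB} (I : Interp A B) (M : Copy B) :
    Set (List ℕ) :=
  {l | ∀ g : ℕ ≃ ℕ, IsIso M.1 B g → List.map (⇑g) l ∈ I.Dom}

/-- The equivalence relation of `I`, transferred to a copy `M` of `B`. -/
def EqvIn {LA LB : ℕ → ℕ} {A : Str LA} {B : Str LB} (I : Interp A B) (M : Copy B)
    (l₁ l₂ : List ℕ) : Prop :=
  ∀ g : ℕ ≃ ℕ, IsIso M.1 B g → I.eqv (List.map (⇑g) l₁) (List.map (⇑g) l₂)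

/-- The relations of `I`, transferred to a copy `M` of `B`. -/
def RIn {LA LB : ℕ → ℕ} {A : Str LA} {B : Str LB} (I : Interp A B) (M : Copy B)
    (k : ℕ) (v : Fin (LA k) → List ℕ) : Prop :=
  ∀ g : ℕ ≃ ℕ, IsIso M.1 B g → I.R k fun t => List.map (⇑g) (v t)

/-- `FI` is (a presentation of) the functor `F_I : Iso(B) → Iso(A)` induced by the
interpretation `I`, via the bijections `τ^M : ω → Dom^M/∼`: for each copy `M` of `B`,
`τ M` enumerates the `∼`-classes of the transferred domain without repetition, the
structure `FI.obj M` is the pullback of the interpreted structure along `τ M`, and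
`FI.map` is given by `h ↦ (τ^N)⁻¹ ∘ h̃ ∘ τ^M`. -/
def InducedBy {LA LB : ℕ → ℕ} {A : Str LA} {B : Str LB} (I : Interp A B)
    (FI : IsoFunctor B A) (τ : Copy B → ℕ → List ℕ) : Prop :=
  ∀ M : Copy B,
    (∀ a : ℕ, τ M a ∈ DomIn I M) ∧
    (∀ l ∈ DomIn I M, ∃ a : ℕ, EqvIn I M (τ M a) l) ∧
    (∀ a b : ℕ, EqvIn I M (τ M a) (τ M b) → a = b) ∧
    (∀ (k : ℕ) (v : Fin (LA k) → ℕ),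
      (FI.obj M).1.rel k v = true ↔ RIn I M k fun t => τ M (v t)) ∧
    (∀ (N : Copy B) (g : ℕ ≃ ℕ) (hg : IsIso M.1 N.1 g) (a : ℕ),
      EqvIn I N (τ N (FI.map M N g hg a)) (List.map (⇑g) (τ M a)))

end Paper
namespace Paper

section Aux

theorem mem_aut_of {L : ℕ → ℕ} {M : Str L} {g : Equiv.Perm ℕ} (h : IsIso M M g) :
    g ∈ aut M := h

theorem isIso_trans {L : ℕ → ℕ} {M N P : Str L} {g h : ℕ ≃ ℕ}
    (hg : IsIso M N g) (hh : IsIso N P h) : IsIso M P (g.trans h) := by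
  intro i v
  rw [hg i v, hh i fun k => g (v k)]
  rfl

theorem isIso_symm {L : ℕ → ℕ} {M N : Str L} {g : ℕ ≃ ℕ}
    (hg : IsIso M N g) : IsIso N M g.symm := by
  intro i v
  have h := hg i fun k => g.symm (v k)
  simp only [Equiv.apply_symm_apply] at h
  exact h.symm

end Aux

end Paper

namespace Paper

open Topology

variable {L : ℕ → ℕ}

/-- The image of `aut C` inside `(ℕ→ℕ) × (ℕ→ℕ)` via `g ↦ (g, g⁻¹)`. -/
def autSet (C : Str L) : Set ((ℕ → ℕ) × (ℕ → ℕ)) :=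
  {p | (∀ n, p.1 (p.2 n) = n) ∧ (∀ n, p.2 (p.1 n) = n) ∧
    ∀ i (v : Fin (L i) → ℕ), C.rel i v = C.rel i fun k => p.1 (v k)}

theorem mem_autSet_of {C : Str L} {g : Equiv.Perm ℕ} (hg : g ∈ aut C) :
    ((⇑g, ⇑g.symm) : (ℕ → ℕ) × (ℕ → ℕ)) ∈ autSet C :=
  ⟨fun n => g.apply_symm_apply n, fun n => g.symm_apply_apply n, hg⟩

theorem exists_of_mem_autSet {C : Str L} {p : (ℕ → ℕ) × (ℕ → ℕ)} (hp : p ∈ autSet C) :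
    ∃ g ∈ aut C, p.1 = ⇑g ∧ p.2 = ⇑g.symm := by
  obtain ⟨h1, h2, h3⟩ := hp
  exact ⟨⟨p.1, p.2, h2, h1⟩, h3, rfl, rfl⟩

theorem isClosed_autSet (C : Str L) : IsClosed (autSet C) := by
  have h1 : ∀ n : ℕ, IsClosed {p : (ℕ → ℕ) × (ℕ → ℕ) | p.1 (p.2 n) = n} := by
    intro n
    rw [← isOpen_compl_iff]
    have he : {p : (ℕ → ℕ) × (ℕ → ℕ) | p.1 (p.2 n) = n}ᶜ
        = ⋃ m : ℕ, ({p : (ℕ → ℕ) × (ℕ → ℕ) | p.2 n = m} ∩ {p | p.1 m ≠ n}) := by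
      ext p
      simp only [Set.mem_compl_iff, Set.mem_setOf_eq, Set.mem_iUnion, Set.mem_inter_iff]
      constructor
      · intro h; exact ⟨p.2 n, rfl, h⟩
      · rintro ⟨m, hm, h⟩; rw [← hm] at h; exact h
    rw [he]
    refine isOpen_iUnion fun m => IsOpen.inter ?_ ?_
    · show IsOpen ((fun p : (ℕ → ℕ) × (ℕ → ℕ) => p.2 n) ⁻¹' {m})
      exact (isOpen_discrete _).preimage ((continuous_apply n).comp continuous_snd)
    · show IsOpen ((fun p : (ℕ → ℕ) × (ℕ → ℕ) => p.1 m) ⁻¹' {n}ᶜ)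
      exact (isOpen_discrete _).preimage ((continuous_apply m).comp continuous_fst)
  have h2 : ∀ n : ℕ, IsClosed {p : (ℕ → ℕ) × (ℕ → ℕ) | p.2 (p.1 n) = n} := by
    intro n
    rw [← isOpen_compl_iff]
    have he : {p : (ℕ → ℕ) × (ℕ → ℕ) | p.2 (p.1 n) = n}ᶜ
        = ⋃ m : ℕ, ({p : (ℕ → ℕ) × (ℕ → ℕ) | p.1 n = m} ∩ {p | p.2 m ≠ n}) := by
      ext p
      simp only [Set.mem_compl_iff, Set.mem_setOf_eq, Set.mem_iUnion, Set.mem_inter_iff]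
      constructor
      · intro h; exact ⟨p.1 n, rfl, h⟩
      · rintro ⟨m, hm, h⟩; rw [← hm] at h; exact h
    rw [he]
    refine isOpen_iUnion fun m => IsOpen.inter ?_ ?_
    · show IsOpen ((fun p : (ℕ → ℕ) × (ℕ → ℕ) => p.1 n) ⁻¹' {m})
      exact (isOpen_discrete _).preimage ((continuous_apply n).comp continuous_fst)
    · show IsOpen ((fun p : (ℕ → ℕ) × (ℕ → ℕ) => p.2 m) ⁻¹' {n}ᶜ)
      exact (isOpen_discrete _).preimage ((continuous_apply m).comp continuous_snd)
  have h3 : ∀ (i : ℕ) (v : Fin (L i) → ℕ),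
      IsClosed {p : (ℕ → ℕ) × (ℕ → ℕ) | C.rel i v = C.rel i fun k => p.1 (v k)} := by
    intro i v
    have hc : Continuous fun p : (ℕ → ℕ) × (ℕ → ℕ) => C.rel i fun k => p.1 (v k) := by
      have hc1 : Continuous fun p : (ℕ → ℕ) × (ℕ → ℕ) => fun k : Fin (L i) => p.1 (v k) :=
        continuous_pi fun k => (continuous_apply (v k)).comp continuous_fst
      exact (continuous_of_discreteTopology (α := Fin (L i) → ℕ) (f := fun w => C.rel i w)).comp hc1
    have he : {p : (ℕ → ℕ) × (ℕ → ℕ) | C.rel i v = C.rel i fun k => p.1 (v k)}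
        = (fun p : (ℕ → ℕ) × (ℕ → ℕ) => C.rel i fun k => p.1 (v k)) ⁻¹' {C.rel i v} := by
      ext p; simp [eq_comm]
    rw [he]
    exact (isClosed_discrete _).preimage hc
  have he : autSet C = (⋂ n, {p : (ℕ → ℕ) × (ℕ → ℕ) | p.1 (p.2 n) = n}) ∩
      ((⋂ n, {p : (ℕ → ℕ) × (ℕ → ℕ) | p.2 (p.1 n) = n}) ∩
        ⋂ i, ⋂ v : Fin (L i) → ℕ, {p : (ℕ → ℕ) × (ℕ → ℕ) | C.rel i v = C.rel i fun k => p.1 (v k)}) := by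
    ext p
    simp only [autSet, Set.mem_setOf_eq, Set.mem_inter_iff, Set.mem_iInter]
  rw [he]
  exact (isClosed_iInter h1).inter ((isClosed_iInter h2).inter
    (isClosed_iInter fun i => isClosed_iInter (h3 i)))

theorem autSet_shift_mem {C : Str L} {u : Equiv.Perm ℕ} (hu : u ∈ aut C)
    {p : (ℕ → ℕ) × (ℕ → ℕ)} (hp : p ∈ autSet C) :
    ((⇑u ∘ p.1, p.2 ∘ ⇑u.symm) : (ℕ → ℕ) × (ℕ → ℕ)) ∈ autSet C := by
  obtain ⟨h1, h2, h3⟩ := hp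
  refine ⟨fun n => ?_, fun n => ?_, fun i v => ?_⟩
  · show u (p.1 (p.2 (u.symm n))) = n
    rw [h1 (u.symm n)]; exact u.apply_symm_apply n
  · show p.2 (u.symm (u (p.1 n))) = n
    rw [u.symm_apply_apply]; exact h2 n
  · exact (h3 i v).trans (mem_aut hu i fun k => p.1 (v k))

/-- Left translation by `u ∈ aut C` as a homeomorphism of `autSet C`. -/
def autShift (C : Str L) (u : Equiv.Perm ℕ) (hu : u ∈ aut C) : autSet C ≃ₜ autSet C where
  toFun x := ⟨(⇑u ∘ x.1.1, x.1.2 ∘ ⇑u.symm), autSet_shift_mem hu x.2⟩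
  invFun x := ⟨(⇑u.symm ∘ x.1.1, x.1.2 ∘ ⇑u), autSet_shift_mem (inv_mem hu) x.2⟩
  left_inv x := by
    apply Subtype.ext
    refine Prod.ext ?_ ?_
    · funext n; exact u.symm_apply_apply _
    · funext n; exact congrArg x.1.2 (u.symm_apply_apply n)
  right_inv x := by
    apply Subtype.ext
    refine Prod.ext ?_ ?_
    · funext n; exact u.apply_symm_apply _
    · funext n; exact congrArg x.1.2 (u.apply_symm_apply n)
  continuous_toFun := by
    apply Continuous.subtype_mk
    refine Continuous.prodMk ?_ ?_
    · exact continuous_pi fun n =>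
        (continuous_of_discreteTopology (f := ⇑u)).comp
          ((continuous_apply n).comp (continuous_fst.comp continuous_subtype_val))
    · exact continuous_pi fun n =>
        (continuous_apply (u.symm n)).comp (continuous_snd.comp continuous_subtype_val)
  continuous_invFun := by
    apply Continuous.subtype_mk
    refine Continuous.prodMk ?_ ?_
    · exact continuous_pi fun n =>
        (continuous_of_discreteTopology (f := ⇑u.symm)).comp
          ((continuous_apply n).comp (continuous_fst.comp continuous_subtype_val))
    · exact continuous_pi fun n =>
        (continuous_apply (u n)).comp (continuous_snd.comp continuous_subtype_val)

theorem isMeagre_union {X : Type*} [TopologicalSpace X] {s t : Set X}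
    (hs : IsMeagre s) (ht : IsMeagre t) : IsMeagre (s ∪ t) := by
  rw [IsMeagre, Set.compl_union]
  exact Filter.inter_mem hs ht

theorem not_isMeagre_of_isOpen {X : Type*} [TopologicalSpace X] [BaireSpace X] {s : Set X}
    (hs : IsOpen s) (hne : s.Nonempty) : ¬ IsMeagre s := by
  intro h
  have hd : Dense sᶜ := dense_of_mem_residual h
  obtain ⟨x, hx1, hx2⟩ := hd.inter_open_nonempty s hs hne
  exact hx2 hx1

/-- Key Baire-category lemma: a Borel multiplicative map on `aut C` has open point
stabilizers. -/
theorem openStab (C : Str L) (Θ : (ℕ → ℕ) → (ℕ → ℕ)) (hΘ : Measurable Θ)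
    (π : Equiv.Perm ℕ → Equiv.Perm ℕ)
    (hπΘ : ∀ u ∈ aut C, ⇑(π u) = Θ ⇑u)
    (hmul : ∀ u ∈ aut C, ∀ v ∈ aut C, π (u * v) = π u * π v)
    (a : ℕ) : ∃ s : List ℕ, ∀ u ∈ aut C, (∀ x ∈ s, u x = x) → π u a = a := by
  classical
  have hone : (1 : Equiv.Perm ℕ) = π 1 := by
    have h := hmul 1 (one_mem _) 1 (one_mem _)
    rw [one_mul] at h
    exact mul_left_cancel (a := π 1) (by rw [mul_one]; exact h)
  haveI := (isClosed_autSet C).completeSpace_coe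
  haveI : Filter.IsCountablyGenerated (uniformity (autSet C)) := by
    rw [uniformity_subtype]; exact Filter.comap.isCountablyGenerated _ _
  haveI : Nonempty (autSet C) :=
    ⟨⟨(⇑(1 : Equiv.Perm ℕ), ⇑(1 : Equiv.Perm ℕ).symm), mem_autSet_of (one_mem _)⟩⟩
  set f : autSet C → ℕ := fun x => Θ x.1.1 a with hf_def
  have hf : Measurable f :=
    (measurable_pi_apply a).comp (hΘ.comp (measurable_fst.comp measurable_subtype_coe))
  set T : ℕ → Set (autSet C) := fun b => f ⁻¹' {b} with hT_def
  have hTm : ∀ b, MeasurableSet (T b) := fun b => hf (measurableSet_singleton b)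
  obtain ⟨b, hb⟩ : ∃ b, ¬ IsMeagre (T b) := by
    by_contra hc
    push_neg at hc
    have huniv : (Set.univ : Set (autSet C)) = ⋃ b, T b := by
      ext x; simp [hT_def]
    have hmeag : IsMeagre (Set.univ : Set (autSet C)) := by
      rw [huniv]; exact isMeagre_iUnion hc
    have h2 : (∅ : Set (autSet C)) ∈ residual _ := by
      have := hmeag; rwa [IsMeagre, Set.compl_univ] at this
    obtain ⟨x, hx⟩ := (dense_of_mem_residual h2).nonempty
    exact hx
  have hbm : BaireMeasurableSet (T b) := (hTm b).baireMeasurableSet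
  obtain ⟨U, hUopen, hUeq⟩ := hbm.residualEq_isOpen
  have hres : ∀ᶠ x in residual (autSet C), x ∈ T b ↔ x ∈ U := Filter.eventuallyEq_set.mp hUeq
  have hcompl : IsMeagre {x : autSet C | x ∈ T b ↔ x ∈ U}ᶜ := by
    rw [IsMeagre, compl_compl]; exact hres
  have hUT : IsMeagre (U \ T b) := by
    refine hcompl.mono fun x hx => ?_
    simp only [Set.mem_compl_iff, Set.mem_setOf_eq] at hx ⊢
    intro h; exact hx.2 (h.mpr hx.1)
  have hTU : IsMeagre (T b \ U) := by
    refine hcompl.mono fun x hx => ?_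
    simp only [Set.mem_compl_iff, Set.mem_setOf_eq] at hx ⊢
    intro h; exact hx.2 (h.mp hx.1)
  have hUne : U.Nonempty := by
    rcases Set.eq_empty_or_nonempty U with h | h
    · exfalso
      refine hb (hTU.mono (t := T b) fun x (hx : x ∈ T b) => (⟨hx, ?_⟩ : x ∈ T b \ U))
      rw [h]; exact Set.notMem_empty x
    · exact h
  obtain ⟨x₀, hx₀U⟩ := hUne
  obtain ⟨V, hVopen, hVU⟩ := isOpen_induced_iff.mp hUopen
  have hx₀V : (x₀ : (ℕ → ℕ) × (ℕ → ℕ)) ∈ V := by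
    rw [← hVU] at hx₀U; exact hx₀U
  obtain ⟨V₁, V₂, hV₁, hV₂, hm₁, hm₂, hsubV⟩ := isOpen_prod_iff.mp hVopen _ _ hx₀V
  obtain ⟨I₁, u₁, hu₁, hsub₁⟩ := isOpen_pi_iff.mp hV₁ _ hm₁
  obtain ⟨I₂, u₂, hu₂, hsub₂⟩ := isOpen_pi_iff.mp hV₂ _ hm₂
  set K : Finset ℕ := I₁ ∪ I₂ with hK_def
  set Cyl : Set (autSet C) :=
    {x | (∀ i ∈ K, x.1.1 i = x₀.1.1 i) ∧ ∀ i ∈ K, x.1.2 i = x₀.1.2 i} with hCyl_def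
  have hCylsub : Cyl ⊆ U := by
    intro x hx
    have hx1 : x.1.1 ∈ V₁ := by
      apply hsub₁
      intro i hi
      rw [hx.1 i (Finset.mem_union_left _ hi)]
      exact (hu₁ i hi).2
    have hx2 : x.1.2 ∈ V₂ := by
      apply hsub₂
      intro i hi
      rw [hx.2 i (Finset.mem_union_right _ hi)]
      exact (hu₂ i hi).2
    have : (x : (ℕ → ℕ) × (ℕ → ℕ)) ∈ V := hsubV (Set.mk_mem_prod hx1 hx2)
    rw [← hVU]; exact this
  have hCylopen : IsOpen Cyl := by
    have he : Cyl = ⋂ i ∈ K,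
        ({x : autSet C | x.1.1 i = x₀.1.1 i} ∩ {x : autSet C | x.1.2 i = x₀.1.2 i}) := by
      ext x
      simp only [hCyl_def, Set.mem_setOf_eq, Set.mem_iInter, Set.mem_inter_iff]
      constructor
      · intro h i hi; exact ⟨h.1 i hi, h.2 i hi⟩
      · intro h; exact ⟨fun i hi => (h i hi).1, fun i hi => (h i hi).2⟩
    rw [he]
    refine isOpen_biInter_finset fun i _ => IsOpen.inter ?_ ?_
    · show IsOpen ((fun x : autSet C => x.1.1 i) ⁻¹' {x₀.1.1 i})
      exact (isOpen_discrete _).preimage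
        ((continuous_apply i).comp (continuous_fst.comp continuous_subtype_val))
    · show IsOpen ((fun x : autSet C => x.1.2 i) ⁻¹' {x₀.1.2 i})
      exact (isOpen_discrete _).preimage
        ((continuous_apply i).comp (continuous_snd.comp continuous_subtype_val))
  have hx₀Cyl : x₀ ∈ Cyl := ⟨fun _ _ => rfl, fun _ _ => rfl⟩
  -- Step 1: any `u` fixing the relevant finite set fixes `b` under `π`.
  have step1 : ∀ u ∈ aut C, (∀ i ∈ K, u i = i ∧ u (x₀.1.1 i) = x₀.1.1 i) → π u b = b := by
    intro u hu hfix
    set h := autShift C u hu with hh_def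
    have hmaps : ∀ x ∈ Cyl, h x ∈ Cyl := by
      intro x hx
      constructor
      · intro i hi
        show u (x.1.1 i) = x₀.1.1 i
        rw [hx.1 i hi]; exact (hfix i hi).2
      · intro i hi
        show x.1.2 (u.symm i) = x₀.1.2 i
        have : u.symm i = i := by
          rw [Equiv.symm_apply_eq]; exact (hfix i hi).1.symm
        rw [this]; exact hx.2 i hi
    have hpre : IsMeagre (h ⁻¹' (U \ T b)) :=
      hUT.preimage_of_isOpenMap h.continuous h.isOpenMap
    have hsub2 : Cyl \ (T b ∩ h ⁻¹' T b) ⊆ (U \ T b) ∪ h ⁻¹' (U \ T b) := by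
      intro x hx
      by_cases hxT : x ∈ T b
      · right
        refine ⟨hCylsub (hmaps x hx.1), fun hc => hx.2 ⟨hxT, hc⟩⟩
      · exact Or.inl ⟨hCylsub hx.1, hxT⟩
    have hnon : ¬ Cyl ⊆ (U \ T b) ∪ h ⁻¹' (U \ T b) := by
      intro habs
      exact not_isMeagre_of_isOpen hCylopen ⟨x₀, hx₀Cyl⟩ ((isMeagre_union hUT hpre).mono habs)
    obtain ⟨y, hyCyl, hyT⟩ : ∃ y, y ∈ Cyl ∧ y ∈ T b ∩ h ⁻¹' T b := by
      by_contra hcon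
      push_neg at hcon
      exact hnon fun x hx => hsub2 ⟨hx, fun hc => hcon x hx hc⟩
    obtain ⟨g, hg, hgy1, _⟩ := exists_of_mem_autSet y.2
    have e1 : π g a = b := by
      have : Θ y.1.1 a = b := hyT.1
      rw [hπΘ g hg, ← hgy1]; exact this
    have e2 : π (u * g) a = b := by
      have h2 : Θ (⇑u ∘ y.1.1) a = b := hyT.2
      have h3 : ⇑(u * g) = ⇑u ∘ ⇑g := rfl
      rw [hπΘ _ (mul_mem hu hg), h3, ← hgy1]; exact h2
    have h4 : π u (π g a) = b := by
      rw [← Equiv.Perm.mul_apply, ← hmul u hu g hg]; exact e2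
    rw [e1] at h4; exact h4
  -- Step 2: transfer `b` to `a` by a conjugation.
  have hTbne : (T b).Nonempty := by
    rcases Set.eq_empty_or_nonempty (T b) with h | h
    · exact absurd (h ▸ IsMeagre.empty) hb
    · exact h
  obtain ⟨y₁, hy₁⟩ := hTbne
  obtain ⟨g₁, hg₁, hgy₁, _⟩ := exists_of_mem_autSet y₁.2
  have e₁ : π g₁ a = b := by
    have : Θ y₁.1.1 a = b := hy₁
    rw [hπΘ g₁ hg₁, ← hgy₁]; exact this
  have hinv : ∀ c, π g₁⁻¹ (π g₁ c) = c := by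
    intro c
    have h := hmul g₁⁻¹ (inv_mem hg₁) g₁ hg₁
    rw [inv_mul_cancel, ← hone] at h
    have h2 : (π g₁⁻¹ * π g₁) c = c := by rw [← h]; rfl
    calc π g₁⁻¹ (π g₁ c) = (π g₁⁻¹ * π g₁) c := (Equiv.Perm.mul_apply _ _ _).symm
    _ = c := h2
  refine ⟨(K.toList.map fun i => g₁.symm i) ++ K.toList.map fun i => g₁.symm (x₀.1.1 i), ?_⟩
  intro u hu hfixs
  have hfix1 : ∀ i ∈ K, u (g₁.symm i) = g₁.symm i := by
    intro i hi
    exact hfixs _ (List.mem_append_left _ (List.mem_map.mpr ⟨i, Finset.mem_toList.mpr hi, rfl⟩))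
  have hfix2 : ∀ i ∈ K, u (g₁.symm (x₀.1.1 i)) = g₁.symm (x₀.1.1 i) := by
    intro i hi
    exact hfixs _ (List.mem_append_right _ (List.mem_map.mpr ⟨i, Finset.mem_toList.mpr hi, rfl⟩))
  have hu' : g₁ * u * g₁⁻¹ ∈ aut C := mul_mem (mul_mem hg₁ hu) (inv_mem hg₁)
  have hfix' : ∀ i ∈ K, (g₁ * u * g₁⁻¹) i = i ∧ (g₁ * u * g₁⁻¹) (x₀.1.1 i) = x₀.1.1 i := by
    intro i hi
    constructor
    · show g₁ (u (g₁⁻¹ i)) = i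
      have : (g₁⁻¹ : Equiv.Perm ℕ) i = g₁.symm i := rfl
      rw [this, hfix1 i hi]
      exact g₁.apply_symm_apply i
    · show g₁ (u (g₁⁻¹ (x₀.1.1 i))) = x₀.1.1 i
      have : (g₁⁻¹ : Equiv.Perm ℕ) (x₀.1.1 i) = g₁.symm (x₀.1.1 i) := rfl
      rw [this, hfix2 i hi]
      exact g₁.apply_symm_apply _
  have hb' := step1 _ hu' hfix'
  have hcalc : π u a = π g₁⁻¹ (π (g₁ * u * g₁⁻¹) (π g₁ a)) := by
    have h2 : π ((g₁ * u * g₁⁻¹) * g₁) = π (g₁ * u * g₁⁻¹) * π g₁ := hmul _ hu' _ hg₁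
    have h1 : π (g₁⁻¹ * ((g₁ * u * g₁⁻¹) * g₁)) = π g₁⁻¹ * π ((g₁ * u * g₁⁻¹) * g₁) :=
      hmul _ (inv_mem hg₁) _ (mul_mem hu' hg₁)
    have h3 : g₁⁻¹ * ((g₁ * u * g₁⁻¹) * g₁) = u := by group
    rw [h3, h2] at h1
    rw [h1]
    simp [Equiv.Perm.mul_apply]
  rw [hcalc, e₁, hb', ← e₁, hinv]

end Paper
namespace Paper

section InterpConstruction

variable {LA LB : ℕ → ℕ}

/-- The data needed to build an infinitary interpretation of `D` in `C`:
a homomorphism-like map `ρ` from `aut C` to `aut D` together with supports. -/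
structure InterpData (C : Str LB) (D : Str LA) where
  ρ : Equiv.Perm ℕ → Equiv.Perm ℕ
  t : ℕ → List ℕ
  iso : ∀ u ∈ aut C, IsIso D D (ρ u)
  mul : ∀ u ∈ aut C, ∀ v ∈ aut C, ρ (u * v) = ρ u * ρ v
  supp : ∀ a, ∀ u ∈ aut C, (∀ x ∈ t a, u x = x) → ρ u a = a
  len_inj : Function.Injective fun a => (t a).length

variable {C : Str LB} {D : Str LA}

namespace InterpData

theorem one (P : InterpData C D) : P.ρ 1 = 1 := by
  have h := P.mul 1 (one_mem _) 1 (one_mem _)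
  rw [one_mul] at h
  exact (mul_left_cancel (a := P.ρ 1) (by rw [mul_one]; exact h)).symm

theorem mul_apply (P : InterpData C D) {u v : Equiv.Perm ℕ} (hu : u ∈ aut C)
    (hv : v ∈ aut C) (a : ℕ) : P.ρ (u * v) a = P.ρ u (P.ρ v a) := by
  rw [P.mul u hu v hv]; rfl

/-- The domain of the interpretation built from `P`. -/
def IDom (P : InterpData C D) : Set (List ℕ) :=
  {l | ∃ p : ℕ × Equiv.Perm ℕ, p.2 ∈ aut C ∧ l = List.map ⇑p.2 (P.t p.1)}

open scoped Classical in
/-- The interpretation map built from `P`. -/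
noncomputable def Fn (P : InterpData C D) (l : List ℕ) : ℕ :=
  if h : ∃ p : ℕ × Equiv.Perm ℕ, p.2 ∈ aut C ∧ l = List.map ⇑p.2 (P.t p.1)
  then P.ρ h.choose.2 h.choose.1 else 0

theorem t_mem_IDom (P : InterpData C D) (a : ℕ) : P.t a ∈ P.IDom :=
  ⟨(a, 1), one_mem _, by simp⟩

theorem Fn_spec (P : InterpData C D) (a : ℕ) (u : Equiv.Perm ℕ) (hu : u ∈ aut C) :
    P.Fn (List.map ⇑u (P.t a)) = P.ρ u a := by
  have hex : ∃ p : ℕ × Equiv.Perm ℕ, p.2 ∈ aut C ∧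
      List.map ⇑u (P.t a) = List.map ⇑p.2 (P.t p.1) := ⟨(a, u), hu, rfl⟩
  rw [Fn, dif_pos hex]
  obtain ⟨hmem, heq⟩ := hex.choose_spec
  have ha : hex.choose.1 = a := by
    apply P.len_inj
    show (P.t hex.choose.1).length = (P.t a).length
    have h := congrArg List.length heq
    simp only [List.length_map] at h
    exact h.symm
  rw [ha] at heq
  have hfix : ∀ x ∈ P.t a, (u⁻¹ * hex.choose.2) x = x := by
    intro x hx
    have h := List.map_inj_left.mp heq x hx
    show u⁻¹ (hex.choose.2 x) = x
    rw [← h]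
    exact u.symm_apply_apply x
  have hw : u⁻¹ * hex.choose.2 ∈ aut C := mul_mem (inv_mem hu) hmem
  have hρw := P.supp a _ hw hfix
  have huu : u * (u⁻¹ * hex.choose.2) = hex.choose.2 := by group
  calc P.ρ hex.choose.2 hex.choose.1 = P.ρ (u * (u⁻¹ * hex.choose.2)) a := by rw [huu, ha]
  _ = P.ρ u (P.ρ (u⁻¹ * hex.choose.2) a) := P.mul_apply hu hw a
  _ = P.ρ u a := by rw [hρw]

theorem Fn_t (P : InterpData C D) (a : ℕ) : P.Fn (P.t a) = a := by
  have h := P.Fn_spec a 1 (one_mem _)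
  simpa [P.one] using h

theorem IDom_inv (P : InterpData C D) {u : Equiv.Perm ℕ} (hu : u ∈ aut C)
    {l : List ℕ} (hl : l ∈ P.IDom) : List.map ⇑u l ∈ P.IDom := by
  obtain ⟨⟨a, w⟩, hw, rfl⟩ := hl
  exact ⟨(a, u * w), mul_mem hu hw, by rw [List.map_map]; rfl⟩

theorem Fn_map (P : InterpData C D) {u : Equiv.Perm ℕ} (hu : u ∈ aut C)
    {l : List ℕ} (hl : l ∈ P.IDom) : P.Fn (List.map ⇑u l) = P.ρ u (P.Fn l) := by
  obtain ⟨⟨a, w⟩, hw, rfl⟩ := hl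
  rw [List.map_map]
  have h1 : (⇑u ∘ ⇑w) = ⇑(u * w) := rfl
  rw [h1, P.Fn_spec a _ (mul_mem hu hw), P.Fn_spec a _ hw, P.mul_apply hu hw]

/-- The interpretation of `D` in `C` built from `P`. -/
noncomputable def interp (P : InterpData C D) : Interp D C where
  Dom := P.IDom
  eqv l₁ l₂ := l₁ ∈ P.IDom ∧ l₂ ∈ P.IDom ∧ P.Fn l₁ = P.Fn l₂
  R i v := (∀ k, v k ∈ P.IDom) ∧ D.rel i (fun k => P.Fn (v k)) = true
  F := P.Fn
  dom_inv := fun g hg l hl => P.IDom_inv hg hl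
  eqv_inv := by
    rintro g hg l₁ h₁ l₂ h₂ ⟨_, _, he⟩
    exact ⟨P.IDom_inv hg h₁, P.IDom_inv hg h₂, by
      rw [P.Fn_map hg h₁, P.Fn_map hg h₂, he]⟩
  R_inv := by
    rintro i g hg v hv ⟨hdom, hrel⟩
    refine ⟨fun k => P.IDom_inv hg (hdom k), ?_⟩
    have he : (fun k => P.Fn (List.map ⇑g (v k))) = fun k => P.ρ g (P.Fn (v k)) :=
      funext fun k => P.Fn_map hg (hdom k)
    rw [he, ← P.iso g hg i fun k => P.Fn (v k)]
    exact hrel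
  eqv_refl := fun l hl => ⟨hl, hl, rfl⟩
  eqv_symm := fun l₁ _ l₂ _ h => ⟨h.2.1, h.1, h.2.2.symm⟩
  eqv_trans := fun l₁ _ l₂ _ l₃ _ ha hb => ⟨ha.1, hb.2.1, ha.2.2.trans hb.2.2⟩
  R_resp := by
    rintro i v w hv hw he ⟨_, hrel⟩
    refine ⟨hw, ?_⟩
    have h : (fun k => P.Fn (w k)) = fun k => P.Fn (v k) :=
      funext fun k => ((he k).2.2).symm
    rw [h]
    exact hrel
  F_surj := fun a => ⟨P.t a, P.t_mem_IDom a, P.Fn_t a⟩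
  F_eqv := fun l₁ h₁ l₂ h₂ => ⟨fun h => ⟨h₁, h₂, h⟩, fun h => h.2.2⟩
  F_rel := fun i v hv => ⟨fun h => h.2, fun h => ⟨hv, h⟩⟩

end InterpData

/-- A chosen isomorphism from a copy `M` of `C` to `C`. -/
noncomputable def copyIso {L : ℕ → ℕ} {C : Str L} (M : Copy C) :
    {g : ℕ ≃ ℕ // IsIso M.1 C g} :=
  ⟨M.2.choose, M.2.choose_spec⟩

theorem symm_copyIso_mem {L : ℕ → ℕ} {C : Str L} (M : Copy C) {h : ℕ ≃ ℕ}
    (hh : IsIso M.1 C h) : (copyIso M).1.symm.trans h ∈ aut C :=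
  mem_aut_of (isIso_trans (isIso_symm (copyIso M).2) hh)

theorem conj_mem_aut {L : ℕ → ℕ} {C : Str L} {M N : Copy C} {g : ℕ ≃ ℕ}
    (hg : IsIso M.1 N.1 g) :
    (copyIso M).1.symm.trans (g.trans (copyIso N).1) ∈ aut C :=
  symm_copyIso_mem M (isIso_trans hg (copyIso N).2)

namespace InterpData

/-- The functor induced by the interpretation built from `P`. -/
noncomputable def functor (P : InterpData C D) : IsoFunctor C D where
  obj _ := selfCopy D
  map M N g _ := P.ρ ((copyIso M).1.symm.trans (g.trans (copyIso N).1))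
  map_iso M N g hg := P.iso _ (conj_mem_aut hg)
  map_id M _ := by
    show P.ρ ((copyIso M).1.symm.trans ((Equiv.refl ℕ).trans (copyIso M).1)) = Equiv.refl ℕ
    have he : (copyIso M).1.symm.trans ((Equiv.refl ℕ).trans (copyIso M).1)
        = (1 : Equiv.Perm ℕ) := by
      ext x; simp
    rw [he, P.one]; rfl
  map_comp M N Q g₁ h₁ g₂ h₂ _ := by
    show P.ρ ((copyIso M).1.symm.trans ((g₁.trans g₂).trans (copyIso Q).1))
      = (P.ρ ((copyIso M).1.symm.trans (g₁.trans (copyIso N).1))).trans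
        (P.ρ ((copyIso N).1.symm.trans (g₂.trans (copyIso Q).1)))
    have he : (copyIso M).1.symm.trans ((g₁.trans g₂).trans (copyIso Q).1)
        = ((copyIso N).1.symm.trans (g₂.trans (copyIso Q).1))
          * ((copyIso M).1.symm.trans (g₁.trans (copyIso N).1)) := by
      ext x; simp [Equiv.Perm.mul_apply]
    rw [he, P.mul _ (conj_mem_aut h₂) _ (conj_mem_aut h₁)]
    rfl

/-- The enumeration of equivalence classes in each copy. -/
noncomputable def tau (P : InterpData C D) : Copy C → ℕ → List ℕ :=
  fun M a => List.map ⇑(copyIso M).1.symm (P.t a)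

theorem map_tau (P : InterpData C D) (M : Copy C) {h : ℕ ≃ ℕ} (hh : IsIso M.1 C h)
    (a : ℕ) : List.map ⇑h (P.tau M a)
      = List.map ⇑((copyIso M).1.symm.trans h) (P.t a) := by
  rw [tau, List.map_map]; rfl

theorem inducedBy (P : InterpData C D) : InducedBy P.interp P.functor P.tau := by
  intro M
  refine ⟨?_, ?_, ?_, ?_, ?_⟩
  · -- τ M a ∈ DomIn
    intro a h hh
    rw [P.map_tau M hh a]
    exact P.IDom_inv (symm_copyIso_mem M hh) (P.t_mem_IDom a)
  · -- surjectivity on classes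
    intro l hl
    have h0 : List.map ⇑(copyIso M).1 l ∈ P.IDom := hl (copyIso M).1 (copyIso M).2
    refine ⟨P.Fn (List.map ⇑(copyIso M).1 l), ?_⟩
    intro h hh
    have hu := symm_copyIso_mem M hh
    rw [P.map_tau M hh]
    have h2 : List.map ⇑h l
        = List.map ⇑((copyIso M).1.symm.trans h) (List.map ⇑(copyIso M).1 l) := by
      rw [List.map_map]
      apply List.map_congr_left
      intro x _
      show h x = ((copyIso M).1.symm.trans h) ((copyIso M).1 x)
      simp
    rw [h2]
    refine ⟨P.IDom_inv hu (P.t_mem_IDom _), P.IDom_inv hu h0, ?_⟩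
    rw [P.Fn_map hu (P.t_mem_IDom _), P.Fn_map hu h0, P.Fn_t]
  · -- injectivity on classes
    intro a b hab
    have h := hab (copyIso M).1 (copyIso M).2
    rw [P.map_tau M (copyIso M).2 a, P.map_tau M (copyIso M).2 b] at h
    have hid : List.map ⇑((copyIso M).1.symm.trans (copyIso M).1) = fun l => l := by
      funext l
      have : ⇑((copyIso M).1.symm.trans (copyIso M).1) = id := by
        funext x; simp
      rw [this, List.map_id]
    have h3 := h.2.2
    rw [congrFun hid (P.t a), congrFun hid (P.t b), P.Fn_t, P.Fn_t] at h3
    exact h3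
  · -- relations
    intro k v
    show D.rel k v = true ↔ RIn P.interp M k fun j => P.tau M (v j)
    constructor
    · intro hrel h hh
      have hu := symm_copyIso_mem M hh
      have he : (fun j => List.map ⇑h (P.tau M (v j)))
          = fun j => List.map ⇑((copyIso M).1.symm.trans h) (P.t (v j)) :=
        funext fun j => P.map_tau M hh (v j)
      rw [he]
      refine ⟨fun j => P.IDom_inv hu (P.t_mem_IDom _), ?_⟩
      have he2 : (fun j => P.Fn (List.map ⇑((copyIso M).1.symm.trans h) (P.t (v j))))
          = fun j => P.ρ ((copyIso M).1.symm.trans h) (v j) := by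
        funext j
        rw [P.Fn_map hu (P.t_mem_IDom _), P.Fn_t]
      rw [he2, ← P.iso _ hu k v]
      exact hrel
    · intro hR
      have h := hR (copyIso M).1 (copyIso M).2
      have he : (fun j => List.map ⇑(copyIso M).1 (P.tau M (v j)))
          = fun j => List.map ⇑((copyIso M).1.symm.trans (copyIso M).1) (P.t (v j)) :=
        funext fun j => P.map_tau M (copyIso M).2 (v j)
      rw [he] at h
      obtain ⟨_, hrel⟩ := h
      have hid : ⇑((copyIso M).1.symm.trans (copyIso M).1) = id := by
        funext x; simp
      rw [hid] at hrel
      have he2 : (fun j => P.Fn (List.map id (P.t (v j)))) = fun j => (v j) := by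
        funext j; rw [List.map_id, P.Fn_t]
      rw [he2] at hrel
      exact hrel
  · -- naturality
    intro N g hg a h hh
    have hu : (copyIso M).1.symm.trans (g.trans (copyIso N).1) ∈ aut C := conj_mem_aut hg
    have hk := symm_copyIso_mem N hh
    show P.interp.eqv _ _
    have hmap : P.functor.map M N g hg a
        = P.ρ ((copyIso M).1.symm.trans (g.trans (copyIso N).1)) a := rfl
    rw [hmap, P.map_tau N hh]
    have h2 : List.map ⇑h (List.map ⇑g (P.tau M a))
        = List.map ⇑(((copyIso M).1.symm.trans (g.trans (copyIso N).1)).trans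
            ((copyIso N).1.symm.trans h)) (P.t a) := by
      rw [tau, List.map_map, List.map_map]
      apply List.map_congr_left
      intro x _
      simp [Function.comp]
    rw [h2]
    refine ⟨P.IDom_inv hk (P.t_mem_IDom _), P.IDom_inv (mul_mem hk hu) (P.t_mem_IDom _), ?_⟩
    · show P.Fn _ = P.Fn (List.map ⇑(((copyIso M).1.symm.trans (g.trans (copyIso N).1)).trans
        ((copyIso N).1.symm.trans h)) (P.t a))
      rw [P.Fn_map hk (P.t_mem_IDom _), P.Fn_t]
      have htr : ((copyIso M).1.symm.trans (g.trans (copyIso N).1)).trans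
          ((copyIso N).1.symm.trans h)
          = ((copyIso N).1.symm.trans h) * ((copyIso M).1.symm.trans (g.trans (copyIso N).1)) := rfl
      rw [htr, P.Fn_spec _ _ (mul_mem hk hu), P.mul_apply hk hu]

end InterpData

end InterpConstruction

end Paper
namespace Paper

section MkRho

variable {LA LB : ℕ → ℕ} {C : Str LB} {D : Str LA}

theorem exists_interpData (C : Str LB) (D : Str LA) (ρ : Equiv.Perm ℕ → Equiv.Perm ℕ)
    (hiso : ∀ u ∈ aut C, IsIso D D (ρ u))
    (hmul : ∀ u ∈ aut C, ∀ v ∈ aut C, ρ (u * v) = ρ u * ρ v)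
    (hsupp : ∀ a, ∃ s : List ℕ, ∀ u ∈ aut C, (∀ x ∈ s, u x = x) → ρ u a = a) :
    ∃ P : InterpData C D, P.ρ = ρ := by
  choose s hs using hsupp
  set len : ℕ → ℕ := fun a => a + 1 + (Finset.range (a + 1)).sup fun i => (s i).length
    with hlen_def
  have hlen_ge : ∀ a, (s a).length ≤ len a := by
    intro a
    have h1 : (s a).length ≤ (Finset.range (a + 1)).sup fun i => (s i).length :=
      Finset.le_sup (f := fun i => (s i).length) (Finset.self_mem_range_succ a)
    calc (s a).length ≤ (Finset.range (a + 1)).sup fun i => (s i).length := h1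
    _ ≤ len a := Nat.le_add_left _ _
  have hmono : StrictMono len := by
    intro a b hab
    have h1 : ((Finset.range (a + 1)).sup fun i => (s i).length)
        ≤ (Finset.range (b + 1)).sup fun i => (s i).length :=
      Finset.sup_mono (Finset.range_subset_range.mpr (by omega))
    simp only [hlen_def]
    omega
  set t : ℕ → List ℕ := fun a => s a ++ List.replicate (len a - (s a).length) 0 with ht_def
  have htlen : ∀ a, (t a).length = len a := by
    intro a
    simp only [ht_def, List.length_append, List.length_replicate]
    have := hlen_ge a
    omega
  refine ⟨⟨ρ, t, hiso, hmul, ?_, ?_⟩, rfl⟩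
  · intro a u hu hfix
    exact hs a u hu fun x hx => hfix x (List.mem_append_left _ hx)
  · intro a b hab
    simp only [htlen] at hab
    exact hmono.injective hab

theorem IsoFunctor.map_congr (H : IsoFunctor C D) {M N : Copy C}
    {g g' : ℕ ≃ ℕ} (h : g = g') (hg : IsIso M.1 N.1 g) (hg' : IsIso M.1 N.1 g') :
    H.map M N g hg = H.map M N g' hg' := by subst h; rfl

theorem IsoFunctor.map_symm_apply (H : IsoFunctor C D) {M N : Copy C} {g : ℕ ≃ ℕ}
    (hg : IsIso M.1 N.1 g) (hg' : IsIso N.1 M.1 g.symm) (x : ℕ) :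
    H.map N M g.symm hg' (H.map M N g hg x) = x := by
  have h1 := H.map_comp M N M g hg g.symm hg' (isIso_trans hg hg')
  have h2 : H.map M M (g.trans g.symm) (isIso_trans hg hg') = Equiv.refl ℕ := by
    rw [H.map_congr (Equiv.self_trans_symm g) _ (isIso_refl M.1)]
    exact H.map_id M (isIso_refl M.1)
  have h3 := congrArg (fun e : ℕ ≃ ℕ => e x) h1
  rw [h2] at h3
  exact h3.symm

open scoped Classical in
/-- The conjugated action of `aut C` on `ℕ` induced by a functor `H` and an
identification `d` of `H` applied to the distinguished copy with `D`. -/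
noncomputable def mkRho (H : IsoFunctor C D) (d : ℕ ≃ ℕ) :
    Equiv.Perm ℕ → Equiv.Perm ℕ := fun u =>
  if hu : u ∈ aut C then
    (d.symm.trans (H.map (selfCopy C) (selfCopy C) u (mem_aut hu))).trans d
  else 1

theorem mkRho_pos (H : IsoFunctor C D) (d : ℕ ≃ ℕ) {u : Equiv.Perm ℕ} (hu : u ∈ aut C) :
    mkRho H d u = (d.symm.trans (H.map (selfCopy C) (selfCopy C) u (mem_aut hu))).trans d := by
  rw [mkRho, dif_pos hu]

theorem mkRho_iso (H : IsoFunctor C D) (d : ℕ ≃ ℕ)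
    (hd : IsIso (H.obj (selfCopy C)).1 D d) :
    ∀ u ∈ aut C, IsIso D D (mkRho H d u) := by
  intro u hu
  rw [mkRho_pos H d hu]
  exact isIso_trans (isIso_trans (isIso_symm hd)
    (H.map_iso (selfCopy C) (selfCopy C) u (mem_aut hu))) hd

theorem mkRho_mul (H : IsoFunctor C D) (d : ℕ ≃ ℕ) :
    ∀ u ∈ aut C, ∀ v ∈ aut C, mkRho H d (u * v) = mkRho H d u * mkRho H d v := by
  intro u hu v hv
  have hmem := mul_mem hu hv
  have hcomp : H.map (selfCopy C) (selfCopy C) (u * v) (mem_aut hmem)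
      = (H.map (selfCopy C) (selfCopy C) v (mem_aut hv)).trans
        (H.map (selfCopy C) (selfCopy C) u (mem_aut hu)) := by
    rw [H.map_congr (show (u * v : Equiv.Perm ℕ) = v.trans u from rfl) _
      (show IsIso C C (v.trans u) from isIso_trans (mem_aut hv) (mem_aut hu))]
    exact H.map_comp (selfCopy C) (selfCopy C) (selfCopy C) v (mem_aut hv) u (mem_aut hu) _
  rw [mkRho_pos H d hmem, mkRho_pos H d hu, mkRho_pos H d hv, hcomp]
  ext x
  simp [Equiv.Perm.mul_apply]

theorem mkRho_supp (H : IsoFunctor C D) (d : ℕ ≃ ℕ)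
    (Ψ : ObjCode LB × (ℕ → ℕ) × ObjCode LB → (ℕ → ℕ)) (hΨm : Measurable Ψ)
    (hΨ : ∀ M N g hg, ⇑(H.map M N g hg) = Ψ (codeStr M.1, ⇑g, codeStr N.1)) (a : ℕ) :
    ∃ s : List ℕ, ∀ u ∈ aut C, (∀ x ∈ s, u x = x) → mkRho H d u a = a := by
  have hdm : Measurable (⇑d : ℕ → ℕ) := measurable_from_top
  have hΘm : Measurable fun y : ℕ → ℕ => fun x : ℕ =>
      d (Ψ (codeStr C, y, codeStr C) (d.symm x)) := by
    apply measurable_pi_lambda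
    intro x
    have h1 : Measurable fun y : ℕ → ℕ => (codeStr C, y, codeStr C) :=
      measurable_const.prodMk (measurable_id.prodMk measurable_const)
    exact hdm.comp ((measurable_pi_apply (d.symm x)).comp (hΨm.comp h1))
  apply openStab C _ hΘm (mkRho H d) ?_ (mkRho_mul H d) a
  intro u hu
  rw [mkRho_pos H d hu]
  funext x
  show d (H.map (selfCopy C) (selfCopy C) u (mem_aut hu) (d.symm x)) = _
  rw [show ⇑(H.map (selfCopy C) (selfCopy C) u (mem_aut hu))
    = Ψ (codeStr (selfCopy C).1, ⇑u, codeStr (selfCopy C).1) from hΨ _ _ _ _]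
  rfl

theorem natIso_mk (H : IsoFunctor C D) (d : ℕ ≃ ℕ) (hd : IsIso (H.obj (selfCopy C)).1 D d)
    (P : InterpData C D) (hP : P.ρ = mkRho H d) : NatIso H P.functor := by
  refine ⟨fun M => (H.map M (selfCopy C) (copyIso M).1 (copyIso M).2).trans d, ?_, ?_⟩
  · intro M
    exact isIso_trans (H.map_iso M (selfCopy C) (copyIso M).1 (copyIso M).2) hd
  · intro M N g hg
    have hu : ((copyIso M).1.symm.trans (g.trans (copyIso N).1)) ∈ aut C := conj_mem_aut hg
    apply Equiv.ext
    intro x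
    simp only [Equiv.trans_apply]
    have hfun : P.functor.map M N g hg
        = mkRho H d ((copyIso M).1.symm.trans (g.trans (copyIso N).1)) := by
      show P.ρ _ = _
      rw [hP]
    rw [hfun, mkRho_pos H d hu]
    simp only [Equiv.trans_apply, Equiv.symm_apply_apply]
    congr 1
    have h1 : H.map M (selfCopy C)
        ((copyIso M).1.trans ((copyIso M).1.symm.trans (g.trans (copyIso N).1)))
        (isIso_trans (copyIso M).2 (mem_aut hu))
        = (H.map M _ (copyIso M).1 (copyIso M).2).trans
          (H.map _ _ _ (mem_aut hu)) :=
      H.map_comp _ _ _ _ (copyIso M).2 _ (mem_aut hu) _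
    have h2 : H.map M (selfCopy C) (g.trans (copyIso N).1)
        (isIso_trans hg (copyIso N).2)
        = (H.map M N g hg).trans (H.map N _ (copyIso N).1 (copyIso N).2) :=
      H.map_comp _ _ _ _ hg _ (copyIso N).2 _
    have he1 : (copyIso M).1.trans ((copyIso M).1.symm.trans (g.trans (copyIso N).1))
        = g.trans (copyIso N).1 := by
      ext y; simp
    have h3 : H.map M (selfCopy C)
        ((copyIso M).1.trans ((copyIso M).1.symm.trans (g.trans (copyIso N).1)))
        (isIso_trans (copyIso M).2 (mem_aut hu))
        = H.map M (selfCopy C) (g.trans (copyIso N).1) (isIso_trans hg (copyIso N).2) :=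
      H.map_congr he1 _ _
    calc H.map _ _ _ (mem_aut hu) (H.map M _ (copyIso M).1 (copyIso M).2 x)
        = ((H.map M _ (copyIso M).1 (copyIso M).2).trans (H.map _ _ _ (mem_aut hu))) x := rfl
    _ = H.map M (selfCopy C)
        ((copyIso M).1.trans ((copyIso M).1.symm.trans (g.trans (copyIso N).1)))
        (isIso_trans (copyIso M).2 (mem_aut hu)) x := by rw [h1]
    _ = H.map M (selfCopy C) (g.trans (copyIso N).1) (isIso_trans hg (copyIso N).2) x := by
        rw [h3]
    _ = ((H.map M N g hg).trans (H.map N _ (copyIso N).1 (copyIso N).2)) x := by rw [h2]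
    _ = H.map N _ (copyIso N).1 (copyIso N).2 (H.map M N g hg x) := rfl

end MkRho

end Paper
namespace Paper

section Main

variable {LA LB : ℕ → ℕ} {A : Str LA} {B : Str LB}

/-- The identification of `G(Â)` with `B` built from `η` and the chosen
identification `e₀` of `F(B̂)` with `A`. -/
noncomputable def dTwo (E : AdjEquiv B A) (e₀ : ℕ ≃ ℕ)
    (he₀ : IsIso (E.F.obj (selfCopy B)).1 A e₀) : ℕ ≃ ℕ :=
  ((E.η (selfCopy B)).trans
    (E.G.map (E.F.obj (selfCopy B)) (selfCopy A) e₀ he₀)).symm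

theorem dTwo_iso (E : AdjEquiv B A) (e₀ : ℕ ≃ ℕ)
    (he₀ : IsIso (E.F.obj (selfCopy B)).1 A e₀) :
    IsIso (E.G.obj (selfCopy A)).1 B (dTwo E e₀ he₀) :=
  isIso_symm (isIso_trans (E.η_iso (selfCopy B))
    (E.G.map_iso (E.F.obj (selfCopy B)) (selfCopy A) e₀ he₀))

theorem dTwo_symm_apply (E : AdjEquiv B A) (e₀ : ℕ ≃ ℕ)
    (he₀ : IsIso (E.F.obj (selfCopy B)).1 A e₀) (x : ℕ) :
    (dTwo E e₀ he₀).symm x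
      = E.G.map (E.F.obj (selfCopy B)) (selfCopy A) e₀ he₀ (E.η (selfCopy B) x) := by
  rw [dTwo, Equiv.symm_symm]; rfl

theorem key_GF (E : AdjEquiv B A) (e₀ : ℕ ≃ ℕ)
    (he₀ : IsIso (E.F.obj (selfCopy B)).1 A e₀) :
    ∀ g ∈ aut B, mkRho E.G (dTwo E e₀ he₀) (mkRho E.F e₀ g) = g := by
  intro g hg
  have h1 : mkRho E.F e₀ g ∈ aut A := mem_aut_of (mkRho_iso E.F e₀ he₀ g hg)
  apply Equiv.ext; intro x
  rw [mkRho_pos E.G _ h1]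
  simp only [Equiv.trans_apply]
  have hr : mkRho E.F e₀ g = e₀.symm.trans
      ((E.F.map (selfCopy B) (selfCopy B) g (mem_aut hg)).trans e₀) := by
    rw [mkRho_pos E.F e₀ hg, Equiv.trans_assoc]
  have hia : IsIso A (E.F.obj (selfCopy B)).1 e₀.symm := isIso_symm he₀
  have hib : IsIso (E.F.obj (selfCopy B)).1 A
      ((E.F.map (selfCopy B) (selfCopy B) g (mem_aut hg)).trans e₀) :=
    isIso_trans (E.F.map_iso (selfCopy B) (selfCopy B) g (mem_aut hg)) he₀
  have hGsplit : E.G.map (selfCopy A) (selfCopy A) (mkRho E.F e₀ g) (mem_aut h1)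
      = (E.G.map (selfCopy A) (E.F.obj (selfCopy B)) e₀.symm hia).trans
        (E.G.map (E.F.obj (selfCopy B)) (selfCopy A)
          ((E.F.map (selfCopy B) (selfCopy B) g (mem_aut hg)).trans e₀) hib) := by
    rw [E.G.map_congr hr _ (isIso_trans hia hib)]
    exact E.G.map_comp (selfCopy A) (E.F.obj (selfCopy B)) (selfCopy A) e₀.symm hia _ hib _
  have hGsplit2 : E.G.map (E.F.obj (selfCopy B)) (selfCopy A)
      ((E.F.map (selfCopy B) (selfCopy B) g (mem_aut hg)).trans e₀) hib
      = (E.G.map (E.F.obj (selfCopy B)) (E.F.obj (selfCopy B))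
          (E.F.map (selfCopy B) (selfCopy B) g (mem_aut hg))
          (E.F.map_iso (selfCopy B) (selfCopy B) g (mem_aut hg))).trans
        (E.G.map (E.F.obj (selfCopy B)) (selfCopy A) e₀ he₀) :=
    E.G.map_comp (E.F.obj (selfCopy B)) (E.F.obj (selfCopy B)) (selfCopy A)
      (E.F.map (selfCopy B) (selfCopy B) g (mem_aut hg))
      (E.F.map_iso (selfCopy B) (selfCopy B) g (mem_aut hg)) e₀ he₀ hib
  rw [hGsplit, hGsplit2]
  simp only [Equiv.trans_apply]
  rw [dTwo_symm_apply E e₀ he₀ x]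
  rw [E.G.map_symm_apply he₀ hia (E.η (selfCopy B) x)]
  have hx2 : E.G.map (E.F.obj (selfCopy B)) (E.F.obj (selfCopy B))
      (E.F.map (selfCopy B) (selfCopy B) g (mem_aut hg))
      (E.F.map_iso (selfCopy B) (selfCopy B) g (mem_aut hg)) (E.η (selfCopy B) x)
      = E.η (selfCopy B) (g x) :=
    congrArg (fun e : ℕ ≃ ℕ => e x) (E.η_nat (selfCopy B) (selfCopy B) g (mem_aut hg))
  rw [hx2, ← dTwo_symm_apply E e₀ he₀ (g x)]
  exact (dTwo E e₀ he₀).apply_symm_apply (g x)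

theorem key_FG (E : AdjEquiv B A) (e₀ : ℕ ≃ ℕ)
    (he₀ : IsIso (E.F.obj (selfCopy B)).1 A e₀) :
    ∀ v ∈ aut A, mkRho E.F e₀ (mkRho E.G (dTwo E e₀ he₀) v) = v := by
  intro v hv
  have h1 : mkRho E.G (dTwo E e₀ he₀) v ∈ aut B :=
    mem_aut_of (mkRho_iso E.G _ (dTwo_iso E e₀ he₀) v hv)
  apply Equiv.ext; intro x
  rw [mkRho_pos E.F e₀ h1]
  simp only [Equiv.trans_apply]
  have hA : IsIso (selfCopy B).1 (E.G.obj (E.F.obj (selfCopy B))).1 (E.η (selfCopy B)) :=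
    E.η_iso (selfCopy B)
  have hB : IsIso (E.G.obj (E.F.obj (selfCopy B))).1 (E.G.obj (selfCopy A)).1
      (E.G.map (E.F.obj (selfCopy B)) (selfCopy A) e₀ he₀) :=
    E.G.map_iso (E.F.obj (selfCopy B)) (selfCopy A) e₀ he₀
  have hC : IsIso (E.G.obj (selfCopy A)).1 (E.G.obj (selfCopy A)).1
      (E.G.map (selfCopy A) (selfCopy A) v (mem_aut hv)) :=
    E.G.map_iso (selfCopy A) (selfCopy A) v (mem_aut hv)
  have hD : IsIso (E.G.obj (selfCopy A)).1 (selfCopy B).1 (dTwo E e₀ he₀) :=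
    dTwo_iso E e₀ he₀
  have hCD : IsIso (E.G.obj (selfCopy A)).1 (selfCopy B).1
      ((E.G.map (selfCopy A) (selfCopy A) v (mem_aut hv)).trans (dTwo E e₀ he₀)) :=
    isIso_trans hC hD
  have hBCD : IsIso (E.G.obj (E.F.obj (selfCopy B))).1 (selfCopy B).1
      ((E.G.map (E.F.obj (selfCopy B)) (selfCopy A) e₀ he₀).trans
        ((E.G.map (selfCopy A) (selfCopy A) v (mem_aut hv)).trans (dTwo E e₀ he₀))) :=
    isIso_trans hB hCD
  have hr : mkRho E.G (dTwo E e₀ he₀) v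
      = (E.η (selfCopy B)).trans ((E.G.map (E.F.obj (selfCopy B)) (selfCopy A) e₀ he₀).trans
        ((E.G.map (selfCopy A) (selfCopy A) v (mem_aut hv)).trans (dTwo E e₀ he₀))) := by
    rw [mkRho_pos E.G _ hv]
    rw [show (dTwo E e₀ he₀).symm = (E.η (selfCopy B)).trans
      (E.G.map (E.F.obj (selfCopy B)) (selfCopy A) e₀ he₀) from by rw [dTwo, Equiv.symm_symm]]
    rw [Equiv.trans_assoc, Equiv.trans_assoc]
  have s1 : E.F.map (selfCopy B) (selfCopy B) (mkRho E.G (dTwo E e₀ he₀) v) (mem_aut h1)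
      = (E.F.map (selfCopy B) (E.G.obj (E.F.obj (selfCopy B))) (E.η (selfCopy B)) hA).trans
        (E.F.map (E.G.obj (E.F.obj (selfCopy B))) (selfCopy B)
          ((E.G.map (E.F.obj (selfCopy B)) (selfCopy A) e₀ he₀).trans
            ((E.G.map (selfCopy A) (selfCopy A) v (mem_aut hv)).trans (dTwo E e₀ he₀)))
          hBCD) := by
    rw [E.F.map_congr hr _ (isIso_trans hA hBCD)]
    exact E.F.map_comp (selfCopy B) (E.G.obj (E.F.obj (selfCopy B))) (selfCopy B)
      (E.η (selfCopy B)) hA _ hBCD _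
  have s2 : E.F.map (E.G.obj (E.F.obj (selfCopy B))) (selfCopy B)
      ((E.G.map (E.F.obj (selfCopy B)) (selfCopy A) e₀ he₀).trans
        ((E.G.map (selfCopy A) (selfCopy A) v (mem_aut hv)).trans (dTwo E e₀ he₀))) hBCD
      = (E.F.map (E.G.obj (E.F.obj (selfCopy B))) (E.G.obj (selfCopy A))
          (E.G.map (E.F.obj (selfCopy B)) (selfCopy A) e₀ he₀) hB).trans
        (E.F.map (E.G.obj (selfCopy A)) (selfCopy B)
          ((E.G.map (selfCopy A) (selfCopy A) v (mem_aut hv)).trans (dTwo E e₀ he₀)) hCD) :=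
    E.F.map_comp (E.G.obj (E.F.obj (selfCopy B))) (E.G.obj (selfCopy A)) (selfCopy B)
      (E.G.map (E.F.obj (selfCopy B)) (selfCopy A) e₀ he₀) hB _ hCD hBCD
  have s3 : E.F.map (E.G.obj (selfCopy A)) (selfCopy B)
      ((E.G.map (selfCopy A) (selfCopy A) v (mem_aut hv)).trans (dTwo E e₀ he₀)) hCD
      = (E.F.map (E.G.obj (selfCopy A)) (E.G.obj (selfCopy A))
          (E.G.map (selfCopy A) (selfCopy A) v (mem_aut hv)) hC).trans
        (E.F.map (E.G.obj (selfCopy A)) (selfCopy B) (dTwo E e₀ he₀) hD) :=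
    E.F.map_comp (E.G.obj (selfCopy A)) (E.G.obj (selfCopy A)) (selfCopy B)
      (E.G.map (selfCopy A) (selfCopy A) v (mem_aut hv)) hC (dTwo E e₀ he₀) hD hCD
  have t1 : ∀ y, E.F.map (selfCopy B) (E.G.obj (E.F.obj (selfCopy B)))
      (E.η (selfCopy B)) hA y = E.ε (E.F.obj (selfCopy B)) y :=
    fun y => congrArg (fun e : ℕ ≃ ℕ => e y) (E.triangleF (selfCopy B))
  have t2 : ∀ y, E.F.map (E.G.obj (E.F.obj (selfCopy B))) (E.G.obj (selfCopy A))
      (E.G.map (E.F.obj (selfCopy B)) (selfCopy A) e₀ he₀) hB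
      (E.ε (E.F.obj (selfCopy B)) y) = E.ε (selfCopy A) (e₀ y) :=
    fun y => congrArg (fun e : ℕ ≃ ℕ => e y)
      (E.ε_nat (E.F.obj (selfCopy B)) (selfCopy A) e₀ he₀)
  have t3 : ∀ y, E.F.map (E.G.obj (selfCopy A)) (E.G.obj (selfCopy A))
      (E.G.map (selfCopy A) (selfCopy A) v (mem_aut hv)) hC
      (E.ε (selfCopy A) y) = E.ε (selfCopy A) (v y) :=
    fun y => congrArg (fun e : ℕ ≃ ℕ => e y)
      (E.ε_nat (selfCopy A) (selfCopy A) v (mem_aut hv))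
  have hAB : IsIso (selfCopy B).1 (E.G.obj (selfCopy A)).1
      ((E.η (selfCopy B)).trans (E.G.map (E.F.obj (selfCopy B)) (selfCopy A) e₀ he₀)) :=
    isIso_trans hA hB
  have hval : ∀ y, E.F.map (selfCopy B) (E.G.obj (selfCopy A))
      ((E.η (selfCopy B)).trans (E.G.map (E.F.obj (selfCopy B)) (selfCopy A) e₀ he₀)) hAB y
      = E.ε (selfCopy A) (e₀ y) := by
    intro y
    have hsp := E.F.map_comp (selfCopy B) (E.G.obj (E.F.obj (selfCopy B)))
      (E.G.obj (selfCopy A)) (E.η (selfCopy B)) hA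
      (E.G.map (E.F.obj (selfCopy B)) (selfCopy A) e₀ he₀) hB hAB
    rw [hsp]
    simp only [Equiv.trans_apply]
    rw [t1 y, t2 y]
  have t4 : ∀ y, E.F.map (E.G.obj (selfCopy A)) (selfCopy B) (dTwo E e₀ he₀) hD
      (E.ε (selfCopy A) (e₀ y)) = y := by
    intro y
    rw [← hval y]
    exact E.F.map_symm_apply hAB hD y
  rw [s1, s2, s3]
  simp only [Equiv.trans_apply]
  rw [t1 (e₀.symm x), t2 (e₀.symm x), Equiv.apply_symm_apply, t3 x]
  have h5 := t4 (e₀.symm (v x))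
  rw [e₀.apply_symm_apply] at h5
  rw [h5]
  exact e₀.apply_symm_apply (v x)

end Main

end Paper
namespace Paper

/-- **Theorem 1.13.** Let `B` and `A` be countable structures.  For every Borel
adjoint equivalence of categories `(F, G, η, ε)` between `Iso(B)` and `Iso(A)` there
is an infinitary bi-interpretation `(I, J)` between `A` and `B` such that `F` is
naturally isomorphic to `F_I` and `G` is naturally isomorphic to `F_J`. -/
theorem adj_equiv_to_biinterp (LA LB : ℕ → ℕ) (A : Str LA) (B : Str LB)
    (E : AdjEquiv B A) (hE : IsBorelAdjEquiv E) :
    ∃ (bi : BiInterp A B) (FI : IsoFunctor B A) (FJ : IsoFunctor A B)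
      (τ : Copy B → ℕ → List ℕ) (ρ : Copy A → ℕ → List ℕ),
      InducedBy bi.I FI τ ∧ InducedBy bi.J FJ ρ ∧ NatIso E.F FI ∧ NatIso E.G FJ := by
  classical
  obtain ⟨hF, hG, -, -⟩ := hE
  obtain ⟨ΦF, ΨF, hΦFm, hΨFm, hΦF, hΨF⟩ := hF
  obtain ⟨ΦG, ΨG, hΦGm, hΨGm, hΦG, hΨG⟩ := hG
  obtain ⟨e₀, he₀⟩ := (E.F.obj (selfCopy B)).2
  obtain ⟨PI, hPI⟩ := exists_interpData B A (mkRho E.F e₀) (mkRho_iso E.F e₀ he₀)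
    (mkRho_mul E.F e₀) (mkRho_supp E.F e₀ ΨF hΨFm hΨF)
  obtain ⟨PJ, hPJ⟩ := exists_interpData A B (mkRho E.G (dTwo E e₀ he₀))
    (mkRho_iso E.G _ (dTwo_iso E e₀ he₀)) (mkRho_mul E.G _)
    (mkRho_supp E.G _ ΨG hΨGm hΨG)
  refine ⟨⟨PI.interp, PJ.interp, ?_, ?_⟩, PI.functor, PJ.functor, PI.tau, PJ.tau,
    PI.inducedBy, PJ.inducedBy, natIso_mk E.F e₀ he₀ PI hPI,
    natIso_mk E.G _ (dTwo_iso E e₀ he₀) PJ hPJ⟩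
  · -- comp_def_B
    intro g hg LL hLL hmem
    have hg1 : mkRho E.F e₀ g ∈ aut A := mem_aut_of (mkRho_iso E.F e₀ he₀ g hg)
    have h1 : List.map PI.interp.F (List.map (List.map ⇑g) LL)
        = List.map ⇑(mkRho E.F e₀ g) (List.map PI.interp.F LL) := by
      rw [List.map_map, List.map_map]
      apply List.map_congr_left
      intro l hl
      show PI.Fn (List.map ⇑g l) = mkRho E.F e₀ g (PI.Fn l)
      rw [← hPI]
      exact PI.Fn_map hg (hLL l hl)
    rw [h1]
    show PJ.Fn (List.map ⇑(mkRho E.F e₀ g) (List.map PI.interp.F LL))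
      = g (PJ.Fn (List.map PI.interp.F LL))
    rw [PJ.Fn_map hg1 hmem, hPJ, key_GF E e₀ he₀ g hg]
  · -- comp_def_A
    intro v hv LL hLL hmem
    have hv1 : mkRho E.G (dTwo E e₀ he₀) v ∈ aut B :=
      mem_aut_of (mkRho_iso E.G _ (dTwo_iso E e₀ he₀) v hv)
    have h1 : List.map PJ.interp.F (List.map (List.map ⇑v) LL)
        = List.map ⇑(mkRho E.G (dTwo E e₀ he₀) v) (List.map PJ.interp.F LL) := by
      rw [List.map_map, List.map_map]
      apply List.map_congr_left
      intro l hl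
      show PJ.Fn (List.map ⇑v l) = mkRho E.G (dTwo E e₀ he₀) v (PJ.Fn l)
      rw [← hPJ]
      exact PJ.Fn_map hv (hLL l hl)
    rw [h1]
    show PI.Fn (List.map ⇑(mkRho E.G (dTwo E e₀ he₀) v) (List.map PJ.interp.F LL))
      = v (PI.Fn (List.map PJ.interp.F LL))
    rw [PI.Fn_map hv1 hmem, hPI, key_FG E e₀ he₀ v hv]

end Paper
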